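/- arXiv:math/0602658 — 2 statements merged into one kernel-verified Lean document; each statement's English description precedes it below -/
import Mathlib

section
/- Let f ∈ L_q^2(ℝ_{q,+}) be such that the functions x ↦ x f(x) and D_q f belong to L_q^2(ℝ_{q,+}), and suppose f(0) = 0 in the sense that f(qⁿ) → 0 as n → +∞. Then ‖f‖_{q,2}² ≤ ((1+q^{3/2})/q^{1/2}) · ‖D_q f‖_{q,2} · (∫_0^∞ x² |f(x)|² d_q x)^{1/2}. -/
open scoped BigOperators
noncomputable section

/-- Jackson `q`-integral over `ℝ_{q,+}` of a complex-valued function: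
`∫₀^∞ f(t) d_q t = (1-q) Σ_{n ∈ ℤ} qⁿ f(qⁿ)`. -/
def jacksonC (q : ℝ) (f : ℝ → ℂ) : ℂ :=
  (1 - q : ℂ) * ∑' n : ℤ, ((q ^ n : ℝ) : ℂ) * f (q ^ n)

/-- Jackson `q`-integral over `ℝ_{q,+}` of a real-valued function. -/
def jacksonR (q : ℝ) (f : ℝ → ℝ) : ℝ :=
  (1 - q) * ∑' n : ℤ, q ^ n * f (q ^ n)

/-- `f ∈ L_q^1(ℝ_{q,+})`. -/
def memL1 (q : ℝ) (f : ℝ → ℂ) : Prop :=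
  Summable fun n : ℤ => q ^ n * ‖f (q ^ n)‖

/-- `f ∈ L_q^2(ℝ_{q,+})`. -/
def memL2 (q : ℝ) (f : ℝ → ℂ) : Prop :=
  Summable fun n : ℤ => q ^ n * ‖f (q ^ n)‖ ^ 2

/-- `‖f‖_{q,1}`. -/
def qNorm1 (q : ℝ) (f : ℝ → ℂ) : ℝ :=
  jacksonR q fun t => ‖f t‖

/-- `‖f‖_{q,2}`. -/
def qNorm2 (q : ℝ) (f : ℝ → ℂ) : ℝ :=
  Real.sqrt (jacksonR q fun t => ‖f t‖ ^ 2)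

/-- The `q`-derivative `D_q f`. -/
def qDeriv (q : ℝ) (f : ℝ → ℂ) (x : ℝ) : ℂ :=
  (f x - f (q * x)) / (((1 - q) * x : ℝ) : ℂ)

/-- `q`-factorial `[n]_q! = Π_{k=1}^n (1-q^k)/(1-q)`. -/
def qFactorial (q : ℝ) (n : ℕ) : ℝ :=
  ∏ k ∈ Finset.range n, (1 - q ^ (k + 1)) / (1 - q)

/-- `sin(x;q²) = Σ_{n≥0} (−1)ⁿ q^{n(n−1)} x^{2n+1}/[2n+1]_q!`. -/
def qSin (q : ℝ) (x : ℝ) : ℝ :=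
  ∑' n : ℕ, (-1 : ℝ) ^ n * q ^ (n * (n - 1)) * x ^ (2 * n + 1) / qFactorial q (2 * n + 1)

/-- `cos(x;q²) = Σ_{n≥0} (−1)ⁿ q^{n(n−1)} x^{2n}/[2n]_q!`. -/
def qCos (q : ℝ) (x : ℝ) : ℝ :=
  ∑' n : ℕ, (-1 : ℝ) ^ n * q ^ (n * (n - 1)) * x ^ (2 * n) / qFactorial q (2 * n)

/-- Infinite `q`-Pochhammer symbol `(a;p)_∞ = Π_{k≥0} (1 − a pᵏ)`. -/
def qPoch (a p : ℝ) : ℝ := ∏' k : ℕ, (1 - a * p ^ k)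

/-- `Γ_{q²}(1/2) = ((q²;q²)_∞/(q;q²)_∞)(1−q²)^{1/2}`. -/
def qGammaHalf (q : ℝ) : ℝ :=
  (qPoch (q ^ 2) (q ^ 2) / qPoch q (q ^ 2)) * Real.sqrt (1 - q ^ 2)

/-- `c_q = (1+q^{−1})^{1/2}/Γ_{q²}(1/2)`. -/
def cq (q : ℝ) : ℝ := Real.sqrt (1 + q⁻¹) / qGammaHalf q

/-- The `q`-Fourier-sine transform `_qF(f)`. -/
def qFourierSin (q : ℝ) (f : ℝ → ℂ) (x : ℝ) : ℂ :=
  (cq q : ℂ) * jacksonC q fun t => f t * (qSin q (x * t) : ℂ)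

/-- The `q`-Fourier-cosine transform `F_q(f)`. -/
def qFourierCos (q : ℝ) (f : ℝ → ℂ) (x : ℝ) : ℂ :=
  (cq q : ℂ) * jacksonC q fun t => f t * (qCos q (x * t) : ℂ)

lemma tsum_cs_aux {u v : ℤ → ℝ} (hu : ∀ n, 0 ≤ u n) (hv : ∀ n, 0 ≤ v n)
    (hu2 : Summable fun n => u n ^ 2) (hv2 : Summable fun n => v n ^ 2) :
    ∑' n, u n * v n ≤ Real.sqrt (∑' n, u n ^ 2) * Real.sqrt (∑' n, v n ^ 2) := by
  have hsum : Summable fun n => u n * v n := by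
    refine Summable.of_nonneg_of_le (fun n => mul_nonneg (hu n) (hv n)) (fun n => ?_)
      ((hu2.add hv2).div_const 2)
    nlinarith [sq_nonneg (u n - v n)]
  refine Summable.tsum_le_of_sum_le hsum fun s => ?_
  calc ∑ i ∈ s, u i * v i
      ≤ Real.sqrt (∑ i ∈ s, u i ^ 2) * Real.sqrt (∑ i ∈ s, v i ^ 2) :=
        Real.sum_mul_le_sqrt_mul_sqrt s u v
    _ ≤ _ := by
        gcongr
        · exact Summable.sum_le_tsum s (fun i _ => sq_nonneg _) hu2
        · exact Summable.sum_le_tsum s (fun i _ => sq_nonneg _) hv2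


/-- `‖f‖_{q,2}² ≤ ((1+q^{3/2})/q^{1/2}) ‖D_q f‖_{q,2} (∫₀^∞ x²|f(x)|² d_q x)^{1/2}`. -/
theorem q_uncertainty_hilbert_form
    (q : ℝ) (hq0 : 0 < q) (hq1 : q < 1)
    (hlog : ∃ m : ℤ, Real.log (1 - q) / Real.log q = (m : ℝ))
    (f : ℝ → ℂ) (hf : memL2 q f)
    (hxf : memL2 q fun x => (x : ℂ) * f x)
    (hDf : memL2 q (qDeriv q f))
    (h0 : Filter.Tendsto (fun n : ℕ => f (q ^ n)) Filter.atTop (nhds 0)) :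
    qNorm2 q f ^ 2 ≤
      (1 + q ^ ((3 : ℝ) / 2)) / q ^ ((1 : ℝ) / 2) * qNorm2 q (qDeriv q f) *
        Real.sqrt (jacksonR q fun x => x ^ 2 * ‖f x‖ ^ 2) := by
  clear hlog h0
  have hq0' : (q : ℝ) ≠ 0 := ne_of_gt hq0
  have h1q : (0 : ℝ) < 1 - q := by linarith
  have hzp : ∀ n : ℤ, (0 : ℝ) < q ^ n := fun n => zpow_pos hq0 n
  set a : ℤ → ℝ := fun n => ‖f (q ^ n)‖ with ha
  set d : ℤ → ℝ := fun n => ‖qDeriv q f (q ^ n)‖ with hd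
  have han : ∀ n, 0 ≤ a n := fun n => norm_nonneg _
  have hdn : ∀ n, 0 ≤ d n := fun n => norm_nonneg _
  have hS : Summable fun n : ℤ => q ^ n * a n ^ 2 := hf
  have hD : Summable fun n : ℤ => q ^ n * d n ^ 2 := hDf
  have hM : Summable fun n : ℤ => (q ^ n) ^ 3 * a n ^ 2 := by
    refine hxf.congr fun n => ?_
    simp only [norm_mul, Complex.norm_real, Real.norm_eq_abs, abs_of_pos (hzp n), mul_pow, ha]
    ring
  set S : ℝ := ∑' n : ℤ, q ^ n * a n ^ 2 with hSdef
  set D : ℝ := ∑' n : ℤ, q ^ n * d n ^ 2 with hDdef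
  set M : ℝ := ∑' n : ℤ, (q ^ n) ^ 3 * a n ^ 2 with hMdef
  have hS0 : 0 ≤ S := tsum_nonneg fun n => mul_nonneg (hzp n).le (sq_nonneg _)
  have hD0 : 0 ≤ D := tsum_nonneg fun n => mul_nonneg (hzp n).le (sq_nonneg _)
  have hM0 : 0 ≤ M := tsum_nonneg fun n => mul_nonneg (pow_nonneg (hzp n).le 3) (sq_nonneg _)
  -- shifted sums
  have hg1 : Summable fun m : ℤ => (q ^ m * a m ^ 2) / q := hS.div_const q
  have key1 : ∀ n : ℤ, (q ^ (n + 1) * a (n + 1) ^ 2) / q = q ^ n * a (n + 1) ^ 2 := by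
    intro n; rw [zpow_add_one₀ hq0']; field_simp
  have hshift2 : Summable fun n : ℤ => q ^ n * a (n + 1) ^ 2 := by
    refine (((Equiv.addRight (1 : ℤ)).summable_iff.mpr hg1).congr fun n => ?_)
    simpa using key1 n
  have hshift2eq : (∑' n : ℤ, q ^ n * a (n + 1) ^ 2) = S / q := by
    have h := (Equiv.addRight (1 : ℤ)).tsum_eq (fun m : ℤ => (q ^ m * a m ^ 2) / q)
    have h2 : (∑' c : ℤ, (q ^ ((Equiv.addRight (1 : ℤ)) c) * a ((Equiv.addRight (1 : ℤ)) c) ^ 2) / q)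
        = ∑' b : ℤ, (q ^ (b + 1) * a (b + 1) ^ 2) / q := tsum_congr fun c => by simp
    rw [← tsum_congr key1, ← h2, h, tsum_div_const]
  have hg3 : Summable fun m : ℤ => ((q ^ m) ^ 3 * a m ^ 2) / q ^ 3 := hM.div_const _
  have key3 : ∀ n : ℤ, ((q ^ (n + 1)) ^ 3 * a (n + 1) ^ 2) / q ^ 3
      = (q ^ n) ^ 3 * a (n + 1) ^ 2 := by
    intro n; rw [zpow_add_one₀ hq0']; field_simp
  have hshift3 : Summable fun n : ℤ => (q ^ n) ^ 3 * a (n + 1) ^ 2 := by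
    refine (((Equiv.addRight (1 : ℤ)).summable_iff.mpr hg3).congr fun n => ?_)
    simpa using key3 n
  have hshift3eq : (∑' n : ℤ, (q ^ n) ^ 3 * a (n + 1) ^ 2) = M / q ^ 3 := by
    have h := (Equiv.addRight (1 : ℤ)).tsum_eq (fun m : ℤ => ((q ^ m) ^ 3 * a m ^ 2) / q ^ 3)
    have h2 : (∑' c : ℤ, ((q ^ ((Equiv.addRight (1 : ℤ)) c)) ^ 3 * a ((Equiv.addRight (1 : ℤ)) c) ^ 2) / q ^ 3)
        = ∑' b : ℤ, ((q ^ (b + 1)) ^ 3 * a (b + 1) ^ 2) / q ^ 3 := tsum_congr fun c => by simp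
    rw [← tsum_congr key3, ← h2, h, tsum_div_const]
  -- pointwise estimate
  have hpt : ∀ n : ℤ, |a n ^ 2 - a (n + 1) ^ 2|
      ≤ (1 - q) * q ^ n * (d n * (a n + a (n + 1))) := by
    intro n
    have hdq : qDeriv q f (q ^ n)
        = (f (q ^ n) - f (q ^ (n + 1))) / (((1 - q) * q ^ n : ℝ) : ℂ) := by
      rw [qDeriv, show q * (q : ℝ) ^ n = q ^ (n + 1) by rw [zpow_add_one₀ hq0']; ring]
    have hdiff : ‖f (q ^ n) - f (q ^ (n + 1))‖ = (1 - q) * q ^ n * d n := by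
      have hdn' : d n = ‖f (q ^ n) - f (q ^ (n + 1))‖ / ((1 - q) * q ^ n) := by
        rw [hd]
        simp only [hdq, norm_div, Complex.norm_real, Real.norm_eq_abs]
        rw [abs_of_pos (by positivity)]
      rw [hdn']
      field_simp
    have h2 : |a n - a (n + 1)| ≤ (1 - q) * q ^ n * d n := by
      calc |a n - a (n + 1)| ≤ ‖f (q ^ n) - f (q ^ (n + 1))‖ :=
            abs_norm_sub_norm_le _ _
        _ = _ := hdiff
    calc |a n ^ 2 - a (n + 1) ^ 2| = |a n - a (n + 1)| * (a n + a (n + 1)) := by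
          rw [← abs_of_nonneg (add_nonneg (han n) (han (n + 1))), ← abs_mul]
          congr 1; ring
      _ ≤ ((1 - q) * q ^ n * d n) * (a n + a (n + 1)) :=
          mul_le_mul_of_nonneg_right h2 (add_nonneg (han n) (han (n + 1)))
      _ = _ := by ring
  -- summability of the product sequences
  have hP1sum : Summable fun n : ℤ => (q ^ n) ^ 2 * (d n * a n) := by
    refine Summable.of_nonneg_of_le
      (fun n => mul_nonneg (by positivity) (mul_nonneg (hdn n) (han n))) (fun n => ?_)
      ((hD.add hM).div_const 2)
    have h := mul_nonneg (hzp n).le (sq_nonneg (d n - q ^ n * a n))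
    nlinarith [h]
  have hP2sum : Summable fun n : ℤ => (q ^ n) ^ 2 * (d n * a (n + 1)) := by
    refine Summable.of_nonneg_of_le
      (fun n => mul_nonneg (by positivity) (mul_nonneg (hdn n) (han (n + 1)))) (fun n => ?_)
      ((hD.add hshift3).div_const 2)
    have h := mul_nonneg (hzp n).le (sq_nonneg (d n - q ^ n * a (n + 1)))
    nlinarith [h]
  -- the telescoping-free identity
  have hTsum : Summable fun n : ℤ => q ^ n * (a (n + 1) ^ 2 - a n ^ 2) :=
    (hshift2.sub hS).congr fun n => by ring
  have hTeq : (∑' n : ℤ, q ^ n * (a (n + 1) ^ 2 - a n ^ 2)) = S * (1 - q) / q := by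
    rw [tsum_congr (fun n : ℤ => show q ^ n * (a (n + 1) ^ 2 - a n ^ 2)
        = q ^ n * a (n + 1) ^ 2 - q ^ n * a n ^ 2 by ring)]
    rw [Summable.tsum_sub hshift2 hS, hshift2eq]
    rw [← hSdef]
    field_simp
  -- bound T by products
  have hTle : (∑' n : ℤ, q ^ n * (a (n + 1) ^ 2 - a n ^ 2))
      ≤ (1 - q) * (∑' n : ℤ, (q ^ n) ^ 2 * (d n * a n))
        + (1 - q) * (∑' n : ℤ, (q ^ n) ^ 2 * (d n * a (n + 1))) := by
    have hle : ∀ n : ℤ, q ^ n * (a (n + 1) ^ 2 - a n ^ 2)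
        ≤ (1 - q) * ((q ^ n) ^ 2 * (d n * a n)) + (1 - q) * ((q ^ n) ^ 2 * (d n * a (n + 1))) := by
      intro n
      have h2 : a (n + 1) ^ 2 - a n ^ 2 ≤ |a n ^ 2 - a (n + 1) ^ 2| := by
        rw [abs_sub_comm]; exact le_abs_self _
      have h3 := h2.trans (hpt n)
      have h4 := mul_le_mul_of_nonneg_left h3 (hzp n).le
      refine h4.trans_eq ?_
      ring
    calc (∑' n : ℤ, q ^ n * (a (n + 1) ^ 2 - a n ^ 2))
        ≤ ∑' n : ℤ, ((1 - q) * ((q ^ n) ^ 2 * (d n * a n))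
            + (1 - q) * ((q ^ n) ^ 2 * (d n * a (n + 1)))) :=
          Summable.tsum_le_tsum hle hTsum ((hP1sum.mul_left _).add (hP2sum.mul_left _))
      _ = _ := by
          rw [Summable.tsum_add (hP1sum.mul_left _) (hP2sum.mul_left _), tsum_mul_left, tsum_mul_left]
  -- Cauchy-Schwarz
  have cs1 : (∑' n : ℤ, (q ^ n) ^ 2 * (d n * a n)) ≤ Real.sqrt D * Real.sqrt M := by
    have hprod : ∀ n : ℤ, Real.sqrt (q ^ n) * Real.sqrt ((q ^ n) ^ 3) = (q ^ n) ^ 2 := by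
      intro n
      rw [← Real.sqrt_mul (hzp n).le, show (q : ℝ) ^ n * (q ^ n) ^ 3 = ((q ^ n) ^ 2) ^ 2 by ring]
      exact Real.sqrt_sq (by positivity)
    have h1 : ∀ n : ℤ, (q ^ n) ^ 2 * (d n * a n)
        = (Real.sqrt (q ^ n) * d n) * (Real.sqrt ((q ^ n) ^ 3) * a n) := fun n => by
      linear_combination (d n * a n) * (hprod n).symm
    have hu2 : Summable fun n : ℤ => (Real.sqrt (q ^ n) * d n) ^ 2 := by
      refine hD.congr fun n => ?_
      rw [mul_pow, Real.sq_sqrt (hzp n).le]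
    have hv2 : Summable fun n : ℤ => (Real.sqrt ((q ^ n) ^ 3) * a n) ^ 2 := by
      refine hM.congr fun n => ?_
      rw [mul_pow, Real.sq_sqrt (by positivity : (0:ℝ) ≤ (q ^ n) ^ 3)]
    have := tsum_cs_aux (u := fun n => Real.sqrt (q ^ n) * d n)
      (v := fun n => Real.sqrt ((q ^ n) ^ 3) * a n)
      (fun n => mul_nonneg (Real.sqrt_nonneg _) (hdn n))
      (fun n => mul_nonneg (Real.sqrt_nonneg _) (han n)) hu2 hv2
    rw [tsum_congr h1]
    refine this.trans_eq ?_
    congr 1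
    · congr 1
      exact tsum_congr fun n => by rw [mul_pow, Real.sq_sqrt (hzp n).le]
    · congr 1
      exact tsum_congr fun n => by
        rw [mul_pow, Real.sq_sqrt (by positivity : (0:ℝ) ≤ (q ^ n) ^ 3)]
  have cs2 : (∑' n : ℤ, (q ^ n) ^ 2 * (d n * a (n + 1)))
      ≤ Real.sqrt D * Real.sqrt (M / q ^ 3) := by
    have hprod : ∀ n : ℤ, Real.sqrt (q ^ n) * Real.sqrt ((q ^ n) ^ 3) = (q ^ n) ^ 2 := by
      intro n
      rw [← Real.sqrt_mul (hzp n).le, show (q : ℝ) ^ n * (q ^ n) ^ 3 = ((q ^ n) ^ 2) ^ 2 by ring]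
      exact Real.sqrt_sq (by positivity)
    have h1 : ∀ n : ℤ, (q ^ n) ^ 2 * (d n * a (n + 1))
        = (Real.sqrt (q ^ n) * d n) * (Real.sqrt ((q ^ n) ^ 3) * a (n + 1)) := fun n => by
      linear_combination (d n * a (n + 1)) * (hprod n).symm
    have hu2 : Summable fun n : ℤ => (Real.sqrt (q ^ n) * d n) ^ 2 := by
      refine hD.congr fun n => ?_
      rw [mul_pow, Real.sq_sqrt (hzp n).le]
    have hv2 : Summable fun n : ℤ => (Real.sqrt ((q ^ n) ^ 3) * a (n + 1)) ^ 2 := by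
      refine hshift3.congr fun n => ?_
      rw [mul_pow, Real.sq_sqrt (by positivity : (0:ℝ) ≤ (q ^ n) ^ 3)]
    have := tsum_cs_aux (u := fun n => Real.sqrt (q ^ n) * d n)
      (v := fun n => Real.sqrt ((q ^ n) ^ 3) * a (n + 1))
      (fun n => mul_nonneg (Real.sqrt_nonneg _) (hdn n))
      (fun n => mul_nonneg (Real.sqrt_nonneg _) (han (n + 1))) hu2 hv2
    rw [tsum_congr h1]
    refine this.trans_eq ?_
    congr 1
    · congr 1
      exact tsum_congr fun n => by rw [mul_pow, Real.sq_sqrt (hzp n).le]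
    · rw [← hshift3eq]
      congr 1
      exact tsum_congr fun n => by
        rw [mul_pow, Real.sq_sqrt (by positivity : (0:ℝ) ≤ (q ^ n) ^ 3)]
  -- core inequality  S ≤ C √D √M
  set t : ℝ := Real.sqrt q with htdef
  have ht0 : 0 < t := Real.sqrt_pos.mpr hq0
  have hsq : t ^ 2 = q := Real.sq_sqrt hq0.le
  have hq3t : Real.sqrt ((q : ℝ) ^ 3) = t ^ 3 := by
    rw [show (q : ℝ) ^ 3 = (t ^ 3) ^ 2 by rw [← hsq]; ring]
    exact Real.sqrt_sq (by positivity)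
  have hMq3 : Real.sqrt (M / q ^ 3) = Real.sqrt M / t ^ 3 := by
    rw [Real.sqrt_div hM0, hq3t]
  have hrpow12 : q ^ ((1 : ℝ) / 2) = t := by
    rw [htdef, Real.sqrt_eq_rpow]
  have hrpow32 : q ^ ((3 : ℝ) / 2) = t ^ 3 := by
    rw [htdef, Real.sqrt_eq_rpow, ← Real.rpow_natCast (q ^ ((1:ℝ)/2)) 3,
      ← Real.rpow_mul hq0.le]
    try norm_num
  have hcore : S ≤ (1 + q ^ ((3 : ℝ) / 2)) / q ^ ((1 : ℝ) / 2) * (Real.sqrt D * Real.sqrt M) := by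
    have h5 : S * (1 - q) / q ≤ (1 - q) * (Real.sqrt D * Real.sqrt M)
        + (1 - q) * (Real.sqrt D * (Real.sqrt M / t ^ 3)) := by
      rw [← hTeq]
      refine hTle.trans ?_
      rw [← hMq3]
      exact add_le_add (mul_le_mul_of_nonneg_left cs1 h1q.le)
        (mul_le_mul_of_nonneg_left cs2 h1q.le)
    have h6 : S ≤ q * ((Real.sqrt D * Real.sqrt M) + Real.sqrt D * (Real.sqrt M / t ^ 3)) := by
      have h7 := mul_le_mul_of_nonneg_left h5 (le_of_lt (by positivity : (0:ℝ) < q / (1 - q)))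
      calc S = (q / (1 - q)) * (S * (1 - q) / q) := by field_simp; try ring
        _ ≤ (q / (1 - q)) * ((1 - q) * (Real.sqrt D * Real.sqrt M)
            + (1 - q) * (Real.sqrt D * (Real.sqrt M / t ^ 3))) := h7
        _ = q * ((Real.sqrt D * Real.sqrt M) + Real.sqrt D * (Real.sqrt M / t ^ 3)) := by
            field_simp
    refine h6.trans_eq ?_
    rw [hrpow12, hrpow32]
    have ht' : t ≠ 0 := ne_of_gt ht0
    rw [← hsq]
    field_simp
    ring
  -- assemble
  have hL : qNorm2 q f ^ 2 = (1 - q) * S := by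
    rw [qNorm2, Real.sq_sqrt]
    · rfl
    · exact mul_nonneg h1q.le hS0
  have hDnorm : qNorm2 q (qDeriv q f) = Real.sqrt (1 - q) * Real.sqrt D := by
    rw [qNorm2, jacksonR, ← Real.sqrt_mul h1q.le]
  have hMnorm : Real.sqrt (jacksonR q fun x => x ^ 2 * ‖f x‖ ^ 2)
      = Real.sqrt (1 - q) * Real.sqrt M := by
    rw [jacksonR, ← Real.sqrt_mul h1q.le]
    congr 2
    exact tsum_congr fun n => by rw [ha]; ring
  rw [hL, hDnorm, hMnorm]
  calc (1 - q) * S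
      ≤ (1 - q) * ((1 + q ^ ((3 : ℝ) / 2)) / q ^ ((1 : ℝ) / 2) * (Real.sqrt D * Real.sqrt M)) :=
        mul_le_mul_of_nonneg_left hcore h1q.le
    _ = (1 + q ^ ((3 : ℝ) / 2)) / q ^ ((1 : ℝ) / 2) * (Real.sqrt (1 - q) * Real.sqrt D)
        * (Real.sqrt (1 - q) * Real.sqrt M) := by
        have hss : Real.sqrt (1 - q) * Real.sqrt (1 - q) = 1 - q := Real.mul_self_sqrt h1q.le
        linear_combination (-(((1 + q ^ ((3 : ℝ) / 2)) / q ^ ((1 : ℝ) / 2)) *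
          Real.sqrt D * Real.sqrt M)) * hss
end
end

section
/- Let f ∈ L_q^2(ℝ_{q,+}) be such that the functions x ↦ x f(x) and D_q f belong to L_q^2(ℝ_{q,+}), and suppose f(0) = 0 in the sense that f(qⁿ) → 0 as n → +∞. Then |∫_0^∞ f(x)·conj(f(qx)) d_q x| ≤ (1 + q^{−1/2}) · ‖D_q f‖_{q,2} · (∫_0^∞ x² |f(x)|² d_q x)^{1/2}. -/
open scoped BigOperators
noncomputable section

private lemma cs_tsum_aux (u v : ℤ → ℝ) (hu0 : ∀ n, 0 ≤ u n) (hv0 : ∀ n, 0 ≤ v n)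
    (hu : Summable fun n => u n ^ 2) (hv : Summable fun n => v n ^ 2) :
    Summable (fun n : ℤ => u n * v n) ∧
      ∑' n : ℤ, u n * v n ≤ Real.sqrt (∑' n : ℤ, u n ^ 2) * Real.sqrt (∑' n : ℤ, v n ^ 2) := by
  have hsum : Summable fun n : ℤ => u n * v n := by
    refine Summable.of_nonneg_of_le (fun n => mul_nonneg (hu0 n) (hv0 n)) (fun n => ?_)
      ((hu.add hv).div_const 2)
    nlinarith [sq_nonneg (u n - v n)]
  refine ⟨hsum, hsum.tsum_le_of_sum_le fun s => ?_⟩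
  refine (Real.sum_mul_le_sqrt_mul_sqrt s u v).trans ?_
  gcongr
  · exact Summable.sum_le_tsum s (fun n _ => sq_nonneg _) hu
  · exact Summable.sum_le_tsum s (fun n _ => sq_nonneg _) hv

private lemma tsum_telescope_zero_aux (g : ℤ → ℝ) (hg : Summable g) :
    ∑' n : ℤ, (g n - g (n + 1)) = 0 := by
  have h2 : Summable fun n : ℤ => g (n + 1) := (Equiv.addRight (1 : ℤ)).summable_iff.2 hg
  rw [Summable.tsum_sub hg h2]
  have h3 : ∑' n : ℤ, g (n + 1) = ∑' n : ℤ, g n := by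
    simpa using (Equiv.addRight (1 : ℤ)).tsum_eq g
  rw [h3, sub_self]

private lemma cs_weighted_aux (q : ℝ) (hq0 : 0 < q) (x y : ℤ → ℝ)
    (hx0 : ∀ n, 0 ≤ x n) (hy0 : ∀ n, 0 ≤ y n)
    (hx : Summable fun n : ℤ => q ^ n * x n ^ 2)
    (hy : Summable fun n : ℤ => q ^ (3 * n) * y n ^ 2) :
    Summable (fun n : ℤ => q ^ (2 * n) * (x n * y n)) ∧
      ∑' n : ℤ, q ^ (2 * n) * (x n * y n) ≤
        Real.sqrt (∑' n : ℤ, q ^ n * x n ^ 2) * Real.sqrt (∑' n : ℤ, q ^ (3 * n) * y n ^ 2) := by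
  have hqne : q ≠ 0 := hq0.ne'
  have hu2 : ∀ n : ℤ, (Real.sqrt (q ^ n) * x n) ^ 2 = q ^ n * x n ^ 2 := fun n => by
    rw [mul_pow, Real.sq_sqrt (zpow_pos hq0 n).le]
  have hv2 : ∀ n : ℤ, (Real.sqrt (q ^ (3 * n)) * y n) ^ 2 = q ^ (3 * n) * y n ^ 2 := fun n => by
    rw [mul_pow, Real.sq_sqrt (zpow_pos hq0 _).le]
  have huv : ∀ n : ℤ, (Real.sqrt (q ^ n) * x n) * (Real.sqrt (q ^ (3 * n)) * y n)
      = q ^ (2 * n) * (x n * y n) := by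
    intro n
    have h1 : Real.sqrt (q ^ n) * Real.sqrt (q ^ (3 * n)) = q ^ (2 * n) := by
      rw [← Real.sqrt_mul (zpow_pos hq0 n).le]
      rw [show q ^ n * q ^ (3 * n) = (q ^ (2 * n)) ^ 2 by
        rw [sq, ← zpow_add₀ hqne, ← zpow_add₀ hqne]; ring_nf]
      exact Real.sqrt_sq (zpow_pos hq0 _).le
    calc (Real.sqrt (q ^ n) * x n) * (Real.sqrt (q ^ (3 * n)) * y n)
        = (Real.sqrt (q ^ n) * Real.sqrt (q ^ (3 * n))) * (x n * y n) := by ring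
      _ = _ := by rw [h1]
  obtain ⟨hs, hle⟩ := cs_tsum_aux (fun n => Real.sqrt (q ^ n) * x n)
    (fun n => Real.sqrt (q ^ (3 * n)) * y n)
    (fun n => mul_nonneg (Real.sqrt_nonneg _) (hx0 n))
    (fun n => mul_nonneg (Real.sqrt_nonneg _) (hy0 n))
    (by simpa only [hu2] using hx) (by simpa only [hv2] using hy)
  refine ⟨hs.congr huv, ?_⟩
  calc ∑' n : ℤ, q ^ (2 * n) * (x n * y n)
      = ∑' n : ℤ, (Real.sqrt (q ^ n) * x n) * (Real.sqrt (q ^ (3 * n)) * y n) :=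
        (tsum_congr huv).symm
    _ ≤ _ := by simpa only [hu2, hv2] using hle

set_option maxHeartbeats 1000000 in
/-- `|∫₀^∞ f(x) conj(f(qx)) d_q x| ≤ (1+q^{−1/2}) ‖D_q f‖_{q,2} (∫₀^∞ x²|f(x)|² d_q x)^{1/2}`. -/
theorem q_uncertainty_shifted_form
    (q : ℝ) (hq0 : 0 < q) (hq1 : q < 1)
    (hlog : ∃ m : ℤ, Real.log (1 - q) / Real.log q = (m : ℝ))
    (f : ℝ → ℂ) (hf : memL2 q f)
    (hxf : memL2 q fun x => (x : ℂ) * f x)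
    (hDf : memL2 q (qDeriv q f))
    (h0 : Filter.Tendsto (fun n : ℕ => f (q ^ n)) Filter.atTop (nhds 0)) :
    ‖jacksonC q fun x => f x * (starRingEnd ℂ) (f (q * x))‖ ≤
      (1 + q ^ (-(1 : ℝ) / 2)) * qNorm2 q (qDeriv q f) *
        Real.sqrt (jacksonR q fun x => x ^ 2 * ‖f x‖ ^ 2) := by
  have hq : (0:ℝ) < 1 - q := by linarith
  have hqne : q ≠ 0 := hq0.ne'
  have hpos : ∀ n : ℤ, (0:ℝ) < q ^ n := fun n => zpow_pos hq0 n
  have e1 : ∀ n : ℤ, q ^ (n + 1) = q ^ n * q := fun n => by rw [zpow_add₀ hqne, zpow_one]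
  have e2 : ∀ n : ℤ, q ^ (2 * n) = q ^ n * q ^ n := fun n => by rw [two_mul, zpow_add₀ hqne]
  have e3 : ∀ n : ℤ, q ^ (3 * n) = q ^ n * (q ^ n * q ^ n) := fun n => by
    rw [show (3:ℤ) * n = n + (n + n) by ring, zpow_add₀ hqne, zpow_add₀ hqne]
  -- the key pointwise relation
  have hrel : ∀ n : ℤ, f (q ^ (n+1)) = f (q ^ n)
      - (((1 - q) * q ^ n : ℝ) : ℂ) * qDeriv q f (q ^ n) := by
    intro n
    have hc : (((1 - q) * q ^ n : ℝ) : ℂ) ≠ 0 := by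
      exact_mod_cast (mul_pos hq (hpos n)).ne'
    have hd : qDeriv q f (q ^ n)
        = (f (q ^ n) - f (q ^ (n+1))) / (((1 - q) * q ^ n : ℝ) : ℂ) := by
      rw [qDeriv, show q * q ^ n = q ^ (n+1) by rw [e1 n]; ring]
    rw [hd, mul_div_cancel₀ _ hc]; ring
  -- summability of the basic series
  have hg : Summable fun n : ℤ => q ^ n * ‖f (q ^ n)‖ ^ 2 := hf
  have hD : Summable fun n : ℤ => q ^ n * ‖qDeriv q f (q ^ n)‖ ^ 2 := hDf
  have hxf' : Summable fun n : ℤ => q ^ n * ‖((q ^ n : ℝ) : ℂ) * f (q ^ n)‖ ^ 2 := hxf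
  have hB : Summable fun n : ℤ => q ^ (3*n) * ‖f (q ^ n)‖ ^ 2 := by
    refine hxf'.congr fun n => ?_
    rw [norm_mul, Complex.norm_real, Real.norm_eq_abs, abs_of_pos (hpos n), mul_pow, e3 n]
    ring
  -- shifted series
  have hgshift : Summable fun n : ℤ => q ^ (n+1) * ‖f (q ^ (n+1))‖ ^ 2 := by
    exact ((Equiv.addRight (1:ℤ)).summable_iff
      (f := fun n : ℤ => q ^ n * ‖f (q ^ n)‖ ^ 2)).2 hg
  have hR1sum : Summable fun n : ℤ => q ^ n * ‖f (q ^ (n+1))‖ ^ 2 := by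
    refine (hgshift.mul_left q⁻¹).congr fun n => ?_
    rw [e1 n]; field_simp
  have hAeq : (∑' n : ℤ, q ^ n * ‖f (q ^ n)‖ ^ 2)
      = q * ∑' n : ℤ, q ^ n * ‖f (q ^ (n+1))‖ ^ 2 := by
    have h1 : (∑' n : ℤ, q ^ n * ‖f (q ^ n)‖ ^ 2)
        = ∑' n : ℤ, q ^ (n+1) * ‖f (q ^ (n+1))‖ ^ 2 := by
      simpa using ((Equiv.addRight (1:ℤ)).tsum_eq
        (fun n : ℤ => q ^ n * ‖f (q ^ n)‖ ^ 2)).symm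
    rw [h1, ← tsum_mul_left]
    exact tsum_congr fun n => by rw [e1 n]; ring
  have hBshift : Summable fun n : ℤ => q ^ (3*(n+1)) * ‖f (q ^ (n+1))‖ ^ 2 := by
    exact ((Equiv.addRight (1:ℤ)).summable_iff
      (f := fun n : ℤ => q ^ (3*n) * ‖f (q ^ n)‖ ^ 2)).2 hB
  have hB1 : Summable fun n : ℤ => q ^ (3*n) * ‖f (q ^ (n+1))‖ ^ 2 := by
    refine (hBshift.mul_left (q ^ (-3:ℤ))).congr fun n => ?_
    rw [← mul_assoc, ← zpow_add₀ hqne, show (-3 + 3*(n+1) : ℤ) = 3*n by ring]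
  have hBX : (∑' n : ℤ, q ^ (3*n) * ‖f (q ^ (n+1))‖ ^ 2)
      = q ^ (-3:ℤ) * ∑' n : ℤ, q ^ (3*n) * ‖f (q ^ n)‖ ^ 2 := by
    have h1 : (∑' n : ℤ, q ^ (3*n) * ‖f (q ^ n)‖ ^ 2)
        = ∑' n : ℤ, q ^ (3*(n+1)) * ‖f (q ^ (n+1))‖ ^ 2 := by
      simpa using ((Equiv.addRight (1:ℤ)).tsum_eq
        (fun n : ℤ => q ^ (3*n) * ‖f (q ^ n)‖ ^ 2)).symm
    rw [h1, ← tsum_mul_left]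
    exact tsum_congr fun n => by
      rw [← mul_assoc, ← zpow_add₀ hqne, show (-3 + 3*(n+1) : ℤ) = 3*n by ring]
  -- Cauchy-Schwarz bounds
  obtain ⟨hM1, hM1le⟩ := cs_weighted_aux q hq0 (fun n => ‖qDeriv q f (q ^ n)‖)
    (fun n => ‖f (q ^ n)‖) (fun n => norm_nonneg _)
    (fun n => norm_nonneg _) hD hB
  obtain ⟨hM2, hM2le⟩ := cs_weighted_aux q hq0 (fun n => ‖qDeriv q f (q ^ n)‖)
    (fun n => ‖f (q ^ (n+1))‖) (fun n => norm_nonneg _)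
    (fun n => norm_nonneg _) hD hB1
  -- pointwise bounds on the real parts
  have habs2 : ∀ n : ℤ, |q ^ (2*n) * (qDeriv q f (q ^ n) * (starRingEnd ℂ) (f (q ^ n))).re|
      ≤ q ^ (2*n) * (‖qDeriv q f (q ^ n)‖ * ‖f (q ^ n)‖) := by
    intro n
    rw [abs_mul, abs_of_pos (hpos (2*n))]
    refine mul_le_mul_of_nonneg_left ?_ (hpos (2*n)).le
    refine (Complex.abs_re_le_norm _).trans ?_
    rw [norm_mul, Complex.norm_conj]
  have habs3 : ∀ n : ℤ, |q ^ (2*n) * (f (q ^ (n+1)) * (starRingEnd ℂ) (qDeriv q f (q ^ n))).re|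
      ≤ q ^ (2*n) * (‖qDeriv q f (q ^ n)‖ * ‖f (q ^ (n+1))‖) := by
    intro n
    rw [abs_mul, abs_of_pos (hpos (2*n))]
    refine mul_le_mul_of_nonneg_left ?_ (hpos (2*n)).le
    refine (Complex.abs_re_le_norm _).trans ?_
    rw [norm_mul, Complex.norm_conj, mul_comm]
  have hR2abs : Summable fun n : ℤ =>
      |q ^ (2*n) * (qDeriv q f (q ^ n) * (starRingEnd ℂ) (f (q ^ n))).re| :=
    Summable.of_nonneg_of_le (fun n => abs_nonneg _) habs2 hM1
  have hR2sum : Summable fun n : ℤ =>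
      q ^ (2*n) * (qDeriv q f (q ^ n) * (starRingEnd ℂ) (f (q ^ n))).re :=
    summable_abs_iff.mp hR2abs
  have hR3abs : Summable fun n : ℤ =>
      |q ^ (2*n) * (f (q ^ (n+1)) * (starRingEnd ℂ) (qDeriv q f (q ^ n))).re| :=
    Summable.of_nonneg_of_le (fun n => abs_nonneg _) habs3 hM2
  have hR3sum : Summable fun n : ℤ =>
      q ^ (2*n) * (f (q ^ (n+1)) * (starRingEnd ℂ) (qDeriv q f (q ^ n))).re :=
    summable_abs_iff.mp hR3abs
  -- telescoping identity
  have key : ∀ n : ℤ, q ^ n * ‖f (q ^ n)‖ ^ 2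
        - q ^ (n+1) * ‖f (q ^ (n+1))‖ ^ 2
      = (1 - q) * (q ^ n * ‖f (q ^ (n+1))‖ ^ 2
        + (q ^ (2*n) * (qDeriv q f (q ^ n) * (starRingEnd ℂ) (f (q ^ n))).re
          + q ^ (2*n) * (f (q ^ (n+1)) * (starRingEnd ℂ) (qDeriv q f (q ^ n))).re)) := by
    intro n
    rw [hrel n, e1 n, e2 n]
    simp only [Complex.sq_norm, Complex.normSq_apply, Complex.sub_re, Complex.sub_im,
      Complex.mul_re, Complex.mul_im, Complex.ofReal_re, Complex.ofReal_im,
      Complex.conj_re, Complex.conj_im]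
    ring
  have htel : (∑' n : ℤ, (q ^ n * ‖f (q ^ n)‖ ^ 2
      - q ^ (n+1) * ‖f (q ^ (n+1))‖ ^ 2)) = 0 :=
    tsum_telescope_zero_aux (fun n : ℤ => q ^ n * ‖f (q ^ n)‖ ^ 2) hg
  have hsplit : (1 - q) * ((∑' n : ℤ, q ^ n * ‖f (q ^ (n+1))‖ ^ 2)
      + ((∑' n : ℤ, q ^ (2*n) * (qDeriv q f (q ^ n) * (starRingEnd ℂ) (f (q ^ n))).re)
        + (∑' n : ℤ, q ^ (2*n) * (f (q ^ (n+1)) * (starRingEnd ℂ) (qDeriv q f (q ^ n))).re)))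
      = 0 := by
    rw [← Summable.tsum_add hR2sum hR3sum, ← Summable.tsum_add hR1sum (hR2sum.add hR3sum), ← tsum_mul_left]
    exact (tsum_congr fun n => (key n).symm).trans htel
  have hXeq : (∑' n : ℤ, q ^ n * ‖f (q ^ (n+1))‖ ^ 2)
      = -((∑' n : ℤ, q ^ (2*n) * (qDeriv q f (q ^ n) * (starRingEnd ℂ) (f (q ^ n))).re)
        + (∑' n : ℤ, q ^ (2*n) * (f (q ^ (n+1)) * (starRingEnd ℂ) (qDeriv q f (q ^ n))).re)) := by
    have h2 := (mul_eq_zero.mp hsplit).resolve_left hq.ne'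
    linarith
  -- bounds on the two real-part sums
  have hT2 : |∑' n : ℤ, q ^ (2*n) * (qDeriv q f (q ^ n) * (starRingEnd ℂ) (f (q ^ n))).re|
      ≤ Real.sqrt (∑' n : ℤ, q ^ n * ‖qDeriv q f (q ^ n)‖ ^ 2)
        * Real.sqrt (∑' n : ℤ, q ^ (3*n) * ‖f (q ^ n)‖ ^ 2) := by
    have h0 : Summable fun n : ℤ =>
        ‖q ^ (2*n) * (qDeriv q f (q ^ n) * (starRingEnd ℂ) (f (q ^ n))).re‖ := by
      simpa only [Real.norm_eq_abs] using hR2abs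
    have h1 : |∑' n : ℤ, q ^ (2*n) * (qDeriv q f (q ^ n) * (starRingEnd ℂ) (f (q ^ n))).re|
        ≤ ∑' n : ℤ, |q ^ (2*n) * (qDeriv q f (q ^ n) * (starRingEnd ℂ) (f (q ^ n))).re| := by
      simpa only [Real.norm_eq_abs] using norm_tsum_le_tsum_norm h0
    exact h1.trans ((Summable.tsum_le_tsum habs2 hR2abs hM1).trans hM1le)
  have hT3 : |∑' n : ℤ, q ^ (2*n) * (f (q ^ (n+1)) * (starRingEnd ℂ) (qDeriv q f (q ^ n))).re|
      ≤ Real.sqrt (∑' n : ℤ, q ^ n * ‖qDeriv q f (q ^ n)‖ ^ 2)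
        * (Real.sqrt (q ^ (-3:ℤ))
          * Real.sqrt (∑' n : ℤ, q ^ (3*n) * ‖f (q ^ n)‖ ^ 2)) := by
    have h0 : Summable fun n : ℤ =>
        ‖q ^ (2*n) * (f (q ^ (n+1)) * (starRingEnd ℂ) (qDeriv q f (q ^ n))).re‖ := by
      simpa only [Real.norm_eq_abs] using hR3abs
    have h1 : |∑' n : ℤ, q ^ (2*n) * (f (q ^ (n+1)) * (starRingEnd ℂ) (qDeriv q f (q ^ n))).re|
        ≤ ∑' n : ℤ, |q ^ (2*n) * (f (q ^ (n+1)) * (starRingEnd ℂ) (qDeriv q f (q ^ n))).re| := by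
      simpa only [Real.norm_eq_abs] using norm_tsum_le_tsum_norm h0
    refine h1.trans ((Summable.tsum_le_tsum habs3 hR3abs hM2).trans (hM2le.trans ?_))
    rw [hBX, Real.sqrt_mul (zpow_pos hq0 _).le]
  -- the L² norm bound
  have hqc : q * Real.sqrt (q ^ (-3:ℤ)) = Real.sqrt q⁻¹ := by
    have hq3 : (q : ℝ) ^ (-3:ℤ) = (q^3)⁻¹ := by
      rw [zpow_neg]; norm_cast
    rw [hq3, Real.sqrt_inv, Real.sqrt_inv,
      show q^3 = q^2 * q by ring, Real.sqrt_mul (sq_nonneg q), Real.sqrt_sq hq0.le, mul_inv]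
    have hsq : Real.sqrt q ≠ 0 := (Real.sqrt_pos.mpr hq0).ne'
    field_simp
  have hAle : (∑' n : ℤ, q ^ n * ‖f (q ^ n)‖ ^ 2)
      ≤ (q + Real.sqrt q⁻¹)
        * (Real.sqrt (∑' n : ℤ, q ^ n * ‖qDeriv q f (q ^ n)‖ ^ 2)
          * Real.sqrt (∑' n : ℤ, q ^ (3*n) * ‖f (q ^ n)‖ ^ 2)) := by
    have h4 := (abs_le.mp hT2).1
    have h5 := (abs_le.mp hT3).1
    have h6 : q * (Real.sqrt (∑' n : ℤ, q ^ n * ‖qDeriv q f (q ^ n)‖ ^ 2)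
        * (Real.sqrt (q ^ (-3:ℤ))
          * Real.sqrt (∑' n : ℤ, q ^ (3*n) * ‖f (q ^ n)‖ ^ 2)))
        = Real.sqrt q⁻¹
          * (Real.sqrt (∑' n : ℤ, q ^ n * ‖qDeriv q f (q ^ n)‖ ^ 2)
            * Real.sqrt (∑' n : ℤ, q ^ (3*n) * ‖f (q ^ n)‖ ^ 2)) := by
      rw [← hqc]; ring
    rw [hAeq, hXeq]
    nlinarith [hq0, h4, h5, h6]
  -- the complex series
  have hterm : ∀ n : ℤ, ((q ^ n : ℝ) : ℂ) * (f (q ^ n) * (starRingEnd ℂ) (f (q ^ (n+1))))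
      = ((q ^ n : ℝ) : ℂ) * (f (q ^ n) * (starRingEnd ℂ) (f (q ^ n)))
        - (((1 - q) * q ^ (2*n) : ℝ) : ℂ)
          * (f (q ^ n) * (starRingEnd ℂ) (qDeriv q f (q ^ n))) := by
    intro n
    rw [hrel n, map_sub, map_mul, Complex.conj_ofReal, e2 n]
    push_cast
    ring
  have hnorm1 : ∀ n : ℤ, ‖((q ^ n : ℝ) : ℂ) * (f (q ^ n) * (starRingEnd ℂ) (f (q ^ n)))‖
      = q ^ n * ‖f (q ^ n)‖ ^ 2 := by
    intro n
    rw [norm_mul, norm_mul, Complex.norm_real, Real.norm_eq_abs, Complex.norm_conj, abs_of_pos (hpos n), sq]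
  have hnorm2 : ∀ n : ℤ, ‖(((1 - q) * q ^ (2*n) : ℝ) : ℂ)
        * (f (q ^ n) * (starRingEnd ℂ) (qDeriv q f (q ^ n)))‖
      = (1 - q) * (q ^ (2*n)
        * (‖qDeriv q f (q ^ n)‖ * ‖f (q ^ n)‖)) := by
    intro n
    rw [norm_mul, norm_mul, Complex.norm_real, Real.norm_eq_abs, Complex.norm_conj,
      abs_of_pos (mul_pos hq (hpos (2*n)))]
    ring
  have hC1 : Summable fun n : ℤ =>
      ((q ^ n : ℝ) : ℂ) * (f (q ^ n) * (starRingEnd ℂ) (f (q ^ n))) :=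
    Summable.of_norm (hg.congr fun n => (hnorm1 n).symm)
  have hC2 : Summable fun n : ℤ => (((1 - q) * q ^ (2*n) : ℝ) : ℂ)
      * (f (q ^ n) * (starRingEnd ℂ) (qDeriv q f (q ^ n))) :=
    Summable.of_norm ((hM1.mul_left (1 - q)).congr fun n => (hnorm2 n).symm)
  have hSsplit : (∑' n : ℤ, ((q ^ n : ℝ) : ℂ) * (f (q ^ n) * (starRingEnd ℂ) (f (q ^ (n+1)))))
      = (∑' n : ℤ, ((q ^ n : ℝ) : ℂ) * (f (q ^ n) * (starRingEnd ℂ) (f (q ^ n))))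
        - ∑' n : ℤ, (((1 - q) * q ^ (2*n) : ℝ) : ℂ)
          * (f (q ^ n) * (starRingEnd ℂ) (qDeriv q f (q ^ n))) := by
    rw [← Summable.tsum_sub hC1 hC2]
    exact tsum_congr hterm
  have hSbound : ‖∑' n : ℤ,
        ((q ^ n : ℝ) : ℂ) * (f (q ^ n) * (starRingEnd ℂ) (f (q ^ (n+1))))‖
      ≤ (∑' n : ℤ, q ^ n * ‖f (q ^ n)‖ ^ 2)
        + (1 - q) * (Real.sqrt (∑' n : ℤ, q ^ n * ‖qDeriv q f (q ^ n)‖ ^ 2)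
          * Real.sqrt (∑' n : ℤ, q ^ (3*n) * ‖f (q ^ n)‖ ^ 2)) := by
    rw [hSsplit]
    refine (norm_sub_le _ _).trans (add_le_add ?_ ?_)
    · refine (norm_tsum_le_tsum_norm (hg.congr fun n => (hnorm1 n).symm)).trans_eq ?_
      exact tsum_congr hnorm1
    · refine (norm_tsum_le_tsum_norm
        ((hM1.mul_left (1 - q)).congr fun n => (hnorm2 n).symm)).trans ?_
      calc (∑' n : ℤ, ‖(((1 - q) * q ^ (2*n) : ℝ) : ℂ)
            * (f (q ^ n) * (starRingEnd ℂ) (qDeriv q f (q ^ n)))‖)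
          = ∑' n : ℤ, (1 - q) * (q ^ (2*n)
            * (‖qDeriv q f (q ^ n)‖ * ‖f (q ^ n)‖)) :=
            tsum_congr hnorm2
        _ = (1 - q) * ∑' n : ℤ, q ^ (2*n)
            * (‖qDeriv q f (q ^ n)‖ * ‖f (q ^ n)‖) := tsum_mul_left
        _ ≤ _ := mul_le_mul_of_nonneg_left hM1le hq.le
  -- rewriting the goal
  have hrpow : q ^ (-(1:ℝ)/2) = Real.sqrt q⁻¹ := by
    rw [neg_div, Real.rpow_neg hq0.le, ← Real.sqrt_eq_rpow, Real.sqrt_inv]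
  have hjC : (jacksonC q fun x => f x * (starRingEnd ℂ) (f (q * x)))
      = (1 - (q:ℂ)) * ∑' n : ℤ,
        ((q ^ n : ℝ) : ℂ) * (f (q ^ n) * (starRingEnd ℂ) (f (q ^ (n+1)))) := by
    rw [jacksonC]
    congr 1
    exact tsum_congr fun n => by rw [show q * q ^ n = q ^ (n+1) by rw [e1 n]; ring]
  have hjD : qNorm2 q (qDeriv q f)
      = Real.sqrt ((1 - q) * ∑' n : ℤ, q ^ n * ‖qDeriv q f (q ^ n)‖ ^ 2) := rfl
  have hjB : (jacksonR q fun x => x ^ 2 * ‖f x‖ ^ 2)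
      = (1 - q) * ∑' n : ℤ, q ^ (3*n) * ‖f (q ^ n)‖ ^ 2 := by
    rw [jacksonR]
    congr 1
    refine tsum_congr fun n => ?_
    show q ^ n * ((q ^ n) ^ 2 * ‖f (q ^ n)‖ ^ 2)
      = q ^ (3*n) * ‖f (q ^ n)‖ ^ 2
    rw [e3 n]; ring
  rw [hjC, hjD, hjB, hrpow, norm_mul,
    show (1 - (q:ℂ)) = ((1 - q : ℝ) : ℂ) by push_cast; ring,
    Complex.norm_real, Real.norm_eq_abs, abs_of_pos hq, Real.sqrt_mul hq.le, Real.sqrt_mul hq.le]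
  have hfin := mul_le_mul_of_nonneg_left hSbound hq.le
  refine hfin.trans ?_
  have hE : (∑' n : ℤ, q ^ n * ‖f (q ^ n)‖ ^ 2)
      + (1 - q) * (Real.sqrt (∑' n : ℤ, q ^ n * ‖qDeriv q f (q ^ n)‖ ^ 2)
        * Real.sqrt (∑' n : ℤ, q ^ (3*n) * ‖f (q ^ n)‖ ^ 2))
      ≤ (1 + Real.sqrt q⁻¹)
        * (Real.sqrt (∑' n : ℤ, q ^ n * ‖qDeriv q f (q ^ n)‖ ^ 2)
          * Real.sqrt (∑' n : ℤ, q ^ (3*n) * ‖f (q ^ n)‖ ^ 2)) := by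
    nlinarith [hAle]
  calc (1 - q) * ((∑' n : ℤ, q ^ n * ‖f (q ^ n)‖ ^ 2)
        + (1 - q) * (Real.sqrt (∑' n : ℤ, q ^ n * ‖qDeriv q f (q ^ n)‖ ^ 2)
          * Real.sqrt (∑' n : ℤ, q ^ (3*n) * ‖f (q ^ n)‖ ^ 2)))
      ≤ (1 - q) * ((1 + Real.sqrt q⁻¹)
        * (Real.sqrt (∑' n : ℤ, q ^ n * ‖qDeriv q f (q ^ n)‖ ^ 2)
          * Real.sqrt (∑' n : ℤ, q ^ (3*n) * ‖f (q ^ n)‖ ^ 2))) :=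
        mul_le_mul_of_nonneg_left hE hq.le
    _ = (1 + Real.sqrt q⁻¹)
        * (Real.sqrt (1 - q)
          * Real.sqrt (∑' n : ℤ, q ^ n * ‖qDeriv q f (q ^ n)‖ ^ 2))
        * (Real.sqrt (1 - q)
          * Real.sqrt (∑' n : ℤ, q ^ (3*n) * ‖f (q ^ n)‖ ^ 2)) := by
      conv_lhs => rw [← Real.mul_self_sqrt hq.le]
      ring
end
end
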